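/- Let (X,T) be a topological dynamical system, μ a T-invariant Borel probability measure, f ∈ L²(μ), and A = {a_i} a strictly increasing sequence of naturals such that f∘T^{a_n} → f μ-almost everywhere. Then for every τ > 0 and ε > 0 there exist a compact set K ⊆ X with μ(K) > 1 − τ and δ > 0 such that for all x,y ∈ K with d(x,y) < δ one has |f(T^{a_n} x) − f(T^{a_n} y)| < ε for all n ∈ ℕ. -/

import Mathlib

open MeasureTheory Filter Topology BoundedContinuousFunction

lemma my_lusin {X : Type*} [MetricSpace X] [CompactSpace X] [MeasurableSpace X]
    [BorelSpace X] (μ : Measure X) [IsFiniteMeasure μ] (g : X → ℝ)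
    (hg : StronglyMeasurable g) (hg2 : MemLp g 2 μ) {η : ℝ} (hη : 0 < η) :
    ∃ K : Set X, IsCompact K ∧ μ Kᶜ ≤ ENNReal.ofReal η ∧ ContinuousOn g K := by
  -- continuous approximations
  have hφ : ∀ k : ℕ, ∃ φ : X →ᵇ ℝ,
      eLpNorm (g - ⇑φ) 2 μ ≤ ENNReal.ofReal ((1/2 : ℝ)^k) ∧ MemLp (⇑φ) 2 μ := by
    intro k
    refine hg2.exists_boundedContinuous_eLpNorm_sub_le (by norm_num) ?_
    simp only [ne_eq, ENNReal.ofReal_eq_zero, not_le]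
    positivity
  choose φ hφ1 _ using hφ
  have htend : Tendsto (fun k => eLpNorm (⇑(φ k) - g) 2 μ) atTop (𝓝 0) := by
    have h0 : Tendsto (fun k : ℕ => ENNReal.ofReal ((1/2 : ℝ)^k)) atTop (𝓝 0) := by
      rw [← ENNReal.ofReal_zero]
      exact (ENNReal.continuous_ofReal.tendsto 0).comp
        (tendsto_pow_atTop_nhds_zero_of_lt_one (by norm_num) (by norm_num))
    refine tendsto_of_tendsto_of_tendsto_of_le_of_le tendsto_const_nhds h0
      (fun k => zero_le) (fun k => ?_)
    rw [eLpNorm_sub_comm]; exact hφ1 k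
  have hmeas : TendstoInMeasure μ (fun k => ⇑(φ k)) atTop g :=
    tendstoInMeasure_of_tendsto_eLpNorm_of_ne_top (by norm_num) (by norm_num)
      (fun k => (φ k).continuous.aestronglyMeasurable) hg2.1 htend
  obtain ⟨ns, -, hns⟩ := hmeas.exists_seq_tendsto_ae
  obtain ⟨t, htm, htμ, hunif⟩ := tendstoUniformlyOn_of_ae_tendsto'
    (f := fun i => ⇑(φ (ns i))) (g := g) (μ := μ)
    (fun i => (φ (ns i)).continuous.stronglyMeasurable) hg hns (half_pos hη)
  have hcont : ContinuousOn g tᶜ :=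
    hunif.continuousOn (Eventually.of_forall fun i => (φ (ns i)).continuous.continuousOn).frequently
  obtain ⟨K, hKt, hKc, hKμ⟩ := htm.compl.exists_isClosed_diff_lt (measure_ne_top μ _)
    (by simp [ENNReal.ofReal_eq_zero, not_le, half_pos hη] : ENNReal.ofReal (η/2) ≠ 0)
  refine ⟨K, hKc.isCompact, ?_, hcont.mono hKt⟩
  have : Kᶜ ⊆ t ∪ (tᶜ \ K) := by
    intro x hx
    by_cases hxt : x ∈ t
    · exact Or.inl hxt
    · exact Or.inr ⟨hxt, hx⟩
  calc μ Kᶜ ≤ μ (t ∪ (tᶜ \ K)) := measure_mono this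
    _ ≤ μ t + μ (tᶜ \ K) := measure_union_le _ _
    _ ≤ ENNReal.ofReal (η/2) + ENNReal.ofReal (η/2) := add_le_add htμ hKμ.le
    _ = ENNReal.ofReal η := by
        rw [← ENNReal.ofReal_add (by linarith) (by linarith)]; norm_num

theorem stmt5 {X : Type*} [MetricSpace X] [CompactSpace X] [MeasurableSpace X]
    [BorelSpace X] (μ : Measure X) [IsProbabilityMeasure μ] (T : X ≃ₜ X)
    (hT : MeasurePreserving T μ μ) (f : X → ℝ) (hf : MemLp f 2 μ)
    (a : ℕ → ℕ) (ha : StrictMono a)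
    (hae : ∀ᵐ x ∂μ, Tendsto (fun n => f ((⇑T)^[a n] x)) atTop (𝓝 (f x))) :
    ∀ τ > (0 : ℝ), ∀ ε > (0 : ℝ), ∃ K : Set X, IsCompact K ∧
      μ K > ENNReal.ofReal (1 - τ) ∧ ∃ δ > (0 : ℝ),
      ∀ x ∈ K, ∀ y ∈ K, dist x y < δ →
        ∀ n : ℕ, |f ((⇑T)^[a n] x) - f ((⇑T)^[a n] y)| < ε := by
  intro τ hτ ε hε
  -- measurable modification g of f
  set g : X → ℝ := hf.1.mk f with hgdef
  have hgsm : StronglyMeasurable g := hf.1.stronglyMeasurable_mk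
  have hgm : Measurable g := hgsm.measurable
  have hfg : f =ᵐ[μ] g := hf.1.ae_eq_mk
  have hg2 : MemLp g 2 μ := hf.ae_eq hfg
  -- iterates are measure preserving
  have hTk : ∀ k : ℕ, MeasurePreserving ((⇑T)^[k]) μ μ := fun k => hT.iterate k
  -- measurable superset of {f ≠ g} of measure zero
  obtain ⟨D, hDsup, hDm, hDμ⟩ := exists_measurable_superset_of_null
    (by simpa [EventuallyEq, ae_iff] using hfg : μ {x | f x ≠ g x} = 0)
  -- the good full measure set S
  set S : Set X := Dᶜ ∩ ⋂ n : ℕ, ((⇑T)^[a n]) ⁻¹' Dᶜ with hSdef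
  have hSm : MeasurableSet S :=
    hDm.compl.inter (MeasurableSet.iInter fun n => (hTk (a n)).measurable hDm.compl)
  have hSc : μ Sᶜ = 0 := by
    rw [hSdef, Set.compl_inter, Set.compl_iInter]
    refine measure_union_null (by simpa using hDμ) (measure_iUnion_null fun n => ?_)
    rw [← Set.preimage_compl, compl_compl, (hTk (a n)).measure_preimage hDm.nullMeasurableSet]
    exact hDμ
  have hSae : ∀ᵐ x ∂μ, x ∈ S := by
    rw [ae_iff]; exact hSc
  have hSfg : ∀ x ∈ S, ∀ n : ℕ, f ((⇑T)^[a n] x) = g ((⇑T)^[a n] x) := by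
    intro x hx n
    have := hx.2
    rw [Set.mem_iInter] at this
    have h2 := this n
    by_contra h
    exact h2 (hDsup h)
  have hSfg0 : ∀ x ∈ S, f x = g x := by
    intro x hx
    by_contra h
    exact hx.1 (hDsup h)
  -- a.e. convergence for g
  have haeg : ∀ᵐ x ∂μ, Tendsto (fun n => g ((⇑T)^[a n] x)) atTop (𝓝 (g x)) := by
    filter_upwards [hae, hSae] with x hx hxS
    have h1 : (fun n => g ((⇑T)^[a n] x)) = fun n => f ((⇑T)^[a n] x) := by
      ext n; exact (hSfg x hxS n).symm
    rw [h1, ← hSfg0 x hxS]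
    exact hx
  -- reduce τ
  set τ' : ℝ := min τ (1/2) with hτ'def
  have hτ'0 : 0 < τ' := lt_min hτ (by norm_num)
  -- Egorov
  obtain ⟨t, htm, htμ, hunif⟩ := tendstoUniformlyOn_of_ae_tendsto'
    (f := fun n x => g ((⇑T)^[a n] x)) (g := g) (μ := μ)
    (fun n => hgsm.comp_measurable (hTk (a n)).measurable) hgsm haeg
    (show (0:ℝ) < τ'/4 by linarith)
  -- uniform convergence index N
  rw [Metric.tendstoUniformlyOn_iff] at hunif
  obtain ⟨N, hN⟩ := (hunif (ε/4) (by linarith)).exists_forall_of_atTop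
  -- Lusin for g
  have hη0 : (0:ℝ) < τ'/(4*(N+1)) := by positivity
  obtain ⟨K₀, hK₀c, hK₀μ, hK₀cont⟩ := my_lusin μ g hgsm hg2 hη0
  -- compact subset of tᶜ ∩ S
  obtain ⟨C, hCsub, hCcl, hCμ⟩ := (htm.compl.inter hSm).exists_isClosed_diff_lt
    (measure_ne_top μ _)
    (by simp only [ne_eq, ENNReal.ofReal_eq_zero, not_le]; linarith :
      ENNReal.ofReal (τ'/4) ≠ 0)
  have hTcont : ∀ k : ℕ, Continuous ((⇑T)^[k]) := fun k => T.continuous.iterate k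
  set K : Set X := C ∩ (K₀ ∩ ⋂ i ∈ Finset.range N, ((⇑T)^[a i]) ⁻¹' K₀) with hKdef
  have hKcomp : IsCompact K := by
    refine hCcl.isCompact.inter_right (hK₀c.isClosed.inter ?_)
    exact isClosed_biInter fun i _ => hK₀c.isClosed.preimage (hTcont (a i))
  have hKm : MeasurableSet K := hKcomp.measurableSet
  -- measure estimate
  have hμpre : ∀ i : ℕ, μ (((⇑T)^[a i]) ⁻¹' K₀)ᶜ ≤ ENNReal.ofReal (τ'/(4*(N+1))) := by
    intro i
    rw [← Set.preimage_compl, (hTk (a i)).measure_preimage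
      hK₀c.measurableSet.compl.nullMeasurableSet]
    exact hK₀μ
  have hCcμ : μ Cᶜ ≤ ENNReal.ofReal (τ'/4) + ENNReal.ofReal (τ'/4) := by
    have hsub : Cᶜ ⊆ (tᶜ ∩ S)ᶜ ∪ ((tᶜ ∩ S) \ C) := by
      intro x hx
      by_cases h : x ∈ tᶜ ∩ S
      · exact Or.inr ⟨h, hx⟩
      · exact Or.inl h
    refine (measure_mono hsub).trans ((measure_union_le _ _).trans (add_le_add ?_ hCμ.le))
    rw [Set.compl_inter, compl_compl]
    refine (measure_union_le _ _).trans ?_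
    rw [hSc, add_zero]
    exact htμ
  have hKcμ : μ Kᶜ ≤ ENNReal.ofReal (3*τ'/4) := by
    have hsub : Kᶜ ⊆ Cᶜ ∪ (K₀ᶜ ∪ ⋃ i ∈ Finset.range N, (((⇑T)^[a i]) ⁻¹' K₀)ᶜ) := by
      rw [hKdef, Set.compl_inter, Set.compl_inter, Set.compl_iInter₂]
    have hsum : μ (⋃ i ∈ Finset.range N, (((⇑T)^[a i]) ⁻¹' K₀)ᶜ)
        ≤ ENNReal.ofReal (N * (τ'/(4*(N+1)))) := by
      refine (measure_biUnion_finset_le _ _).trans ?_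
      calc ∑ i ∈ Finset.range N, μ (((⇑T)^[a i]) ⁻¹' K₀)ᶜ
          ≤ ∑ _i ∈ Finset.range N, ENNReal.ofReal (τ'/(4*(N+1))) :=
            Finset.sum_le_sum fun i _ => hμpre i
        _ = N * ENNReal.ofReal (τ'/(4*(N+1))) := by
            rw [Finset.sum_const, Finset.card_range, nsmul_eq_mul]
        _ = ENNReal.ofReal (N * (τ'/(4*(N+1)))) := by
            rw [ENNReal.ofReal_mul (by positivity), ENNReal.ofReal_natCast]
    calc μ Kᶜ ≤ μ Cᶜ + (μ K₀ᶜ + μ (⋃ i ∈ Finset.range N, (((⇑T)^[a i]) ⁻¹' K₀)ᶜ)) :=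
          (measure_mono hsub).trans ((measure_union_le _ _).trans
            (add_le_add le_rfl (measure_union_le _ _)))
      _ ≤ (ENNReal.ofReal (τ'/4) + ENNReal.ofReal (τ'/4)) +
            (ENNReal.ofReal (τ'/(4*(N+1))) + ENNReal.ofReal (N * (τ'/(4*(N+1))))) :=
          add_le_add hCcμ (add_le_add hK₀μ hsum)
      _ ≤ ENNReal.ofReal (3*τ'/4) := by
          rw [← ENNReal.ofReal_add (by positivity) (by positivity),
            ← ENNReal.ofReal_add (by positivity) (by positivity),
            ← ENNReal.ofReal_add (by positivity) (by positivity)]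
          refine ENNReal.ofReal_le_ofReal ?_
          have hN1 : ((N:ℝ) + 1) ≠ 0 := by positivity
          have key : τ'/(4*((N:ℝ)+1)) + (N:ℝ) * (τ'/(4*((N:ℝ)+1))) = τ'/4 := by
            field_simp
            ring
          linarith [key]
  have hKμ : μ K > ENNReal.ofReal (1 - τ) := by
    have h1 : ENNReal.ofReal (1-τ) + μ Kᶜ < ENNReal.ofReal (1-τ') + ENNReal.ofReal τ' := by
      refine ENNReal.add_lt_add_of_le_of_lt ENNReal.ofReal_ne_top
        (ENNReal.ofReal_le_ofReal (by have := min_le_left τ (1/2:ℝ); linarith)) ?_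
      exact lt_of_le_of_lt hKcμ (ENNReal.ofReal_lt_ofReal_iff hτ'0 |>.2 (by linarith))
    have hτ'half : τ' ≤ 1/2 := min_le_right _ _
    have h2 : ENNReal.ofReal (1-τ') + ENNReal.ofReal τ' = 1 := by
      rw [← ENNReal.ofReal_add (by linarith) (le_of_lt hτ'0)]
      norm_num
    have h3 : μ K + μ Kᶜ = 1 := by
      rw [measure_add_measure_compl hKm]; exact measure_univ
    have h4 : ENNReal.ofReal (1-τ) + μ Kᶜ < μ K + μ Kᶜ := by
      rw [h3, ← h2]; exact h1
    exact (ENNReal.add_lt_add_iff_right (measure_ne_top μ Kᶜ)).1 h4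
  -- subsets
  have hKC : K ⊆ C := Set.inter_subset_left
  have hKK₀ : K ⊆ K₀ := fun x hx => hx.2.1
  have hKS : K ⊆ S := fun x hx => (hCsub (hKC hx)).2
  have hKt : K ⊆ tᶜ := fun x hx => (hCsub (hKC hx)).1
  have hKpre : ∀ i, i < N → ∀ x ∈ K, (⇑T)^[a i] x ∈ K₀ := by
    intro i hi x hx
    have := hx.2.2
    rw [Set.mem_iInter₂] at this
    exact this i (Finset.mem_range.2 hi)
  -- uniform continuity of the package
  set G : X → (Fin N → ℝ) × ℝ :=
    fun x => ((fun i : Fin N => g ((⇑T)^[a i.1] x)), g x) with hGdef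
  have hGcont : ContinuousOn G K := by
    refine ContinuousOn.prodMk ?_ (hK₀cont.mono hKK₀)
    refine continuousOn_pi.2 fun i => ?_
    exact hK₀cont.comp ((hTcont (a i.1)).continuousOn)
      (fun x hx => hKpre i.1 i.2 x hx)
  have hGu : UniformContinuousOn G K :=
    hKcomp.uniformContinuousOn_of_continuous hGcont
  rw [Metric.uniformContinuousOn_iff] at hGu
  obtain ⟨δ, hδ0, hδ⟩ := hGu (ε/4) (by linarith)
  refine ⟨K, hKcomp, hKμ, δ, hδ0, ?_⟩
  intro x hx y hy hxy n
  rw [hSfg x (hKS hx) n, hSfg y (hKS hy) n]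
  have hGd := hδ x hx y hy hxy
  rw [Prod.dist_eq] at hGd
  have hbase : |g x - g y| < ε/4 := by
    have : dist (G x).2 (G y).2 < ε/4 := lt_of_le_of_lt (le_max_right _ _) hGd
    rwa [Real.dist_eq] at this
  by_cases hn : n < N
  · have h1 : dist ((G x).1 ⟨n, hn⟩) ((G y).1 ⟨n, hn⟩) ≤ dist (G x).1 (G y).1 :=
      dist_le_pi_dist _ _ _
    have h2 : dist (G x).1 (G y).1 < ε/4 := lt_of_le_of_lt (le_max_left _ _) hGd
    have := lt_of_le_of_lt h1 h2
    rw [Real.dist_eq] at this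
    calc |g ((⇑T)^[a n] x) - g ((⇑T)^[a n] y)| < ε/4 := this
      _ < ε := by linarith
  · push_neg at hn
    have hx1 := hN n hn x (hKt hx)
    have hy1 := hN n hn y (hKt hy)
    rw [Real.dist_eq] at hx1 hy1
    have t1 := abs_sub_le (g ((⇑T)^[a n] x)) (g x) (g ((⇑T)^[a n] y))
    have t2 := abs_sub_le (g x) (g y) (g ((⇑T)^[a n] y))
    have hx1' : |g ((⇑T)^[a n] x) - g x| < ε/4 := by rwa [abs_sub_comm] at hx1
    have hy1' : |g y - g ((⇑T)^[a n] y)| < ε/4 := hy1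
    linarith
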